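/- Algebraic resolvent condition for essential self-adjointness in every GNS representation. Let 𝔄 be a unital *-algebra, ω : 𝔄 → ℂ a positive linear functional with ω(1) ≠ 0, (H, D, π, ψ) a GNS quadruple for (𝔄, ω), and a ∈ 𝔄 with a* = a. If there exist b₊, b₋ ∈ 𝔄 such that (a + i·1)·b₊ = 1 and (a − i·1)·b₋ = 1, then the densely defined operator T on H with domain D given by Tx = π(a)x is essentially self-adjoint. -/

import Mathlib

open scoped ComplexOrder

/-- `(H, D, π, ψ)` is a GNS quadruple for `(𝔄, ω)`. -/
def IsGNSQuadruple {A : Type*} [Ring A] [Algebra ℂ A] [StarRing A] [StarModule ℂ A]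
    (ω : A →ₗ[ℂ] ℂ)
    {H : Type*} [NormedAddCommGroup H] [InnerProductSpace ℂ H] [CompleteSpace H]
    (D : Submodule ℂ H) (π : A →ₐ[ℂ] Module.End ℂ D) (ψ : D) : Prop :=
  Dense (D : Set H) ∧
  (∀ (a : A) (x y : D),
    (inner ℂ (((π (star a)) x : D) : H) ((y : D) : H) : ℂ)
      = inner ℂ ((x : D) : H) (((π a) y : D) : H)) ∧
  (∀ x : D, ∃ b : A, (π b) ψ = x) ∧
  (∀ a : A, ω a = inner ℂ ((ψ : D) : H) (((π a) ψ : D) : H))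

/-- A densely defined operator is essentially self-adjoint if its closure is self-adjoint. -/
def EssSelfAdjoint {H : Type*} [NormedAddCommGroup H] [InnerProductSpace ℂ H] [CompleteSpace H]
    (T : H →ₗ.[ℂ] H) : Prop :=
  T.closure.adjoint = T.closure

open scoped InnerProductSpace

section EssSAProof

variable {H : Type*} [NormedAddCommGroup H] [InnerProductSpace ℂ H] [CompleteSpace H]

private theorem essSA_adjoint_isClosed (T : H →ₗ.[ℂ] H) (hd : Dense (T.domain : Set H)) :
    T.adjoint.IsClosed := by
  have hset : (T.adjoint.graph : Set (H × H)) =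
      ⋂ x : T.domain, {p : H × H | ⟪p.2, (x : H)⟫_ℂ = ⟪p.1, T x⟫_ℂ} := by
    ext p
    simp only [Set.mem_iInter, Set.mem_setOf_eq, SetLike.mem_coe]
    constructor
    · intro hp x
      rw [LinearPMap.mem_graph_iff] at hp
      obtain ⟨y, hy1, hy2⟩ := hp
      rw [← hy1, ← hy2]
      exact LinearPMap.adjoint_isFormalAdjoint hd y x
    · intro hp
      have hmem : p.1 ∈ T.adjoint.domain :=
        LinearPMap.mem_adjoint_domain_of_exists _ ⟨p.2, fun x => hp x⟩
      rw [LinearPMap.mem_graph_iff]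
      exact ⟨⟨p.1, hmem⟩, rfl, LinearPMap.adjoint_apply_eq hd _ (fun x => hp x)⟩
  rw [LinearPMap.IsClosed, hset]
  exact isClosed_iInter fun x => isClosed_eq
    (Continuous.inner continuous_snd continuous_const)
    (Continuous.inner continuous_fst continuous_const)

omit [CompleteSpace H] in
private theorem essSA_norm_le (T : H →ₗ.[ℂ] H)
    (hsymm : ∀ x y : T.domain, ⟪T x, (y : H)⟫_ℂ = ⟪(x : H), T y⟫_ℂ)
    (c : ℂ) (hc : c.re = 0) (hc2 : ‖c‖ = 1) (x : T.domain) :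
    ‖(x : H)‖ ≤ ‖T x + c • (x : H)‖ ∧ ‖T x‖ ≤ ‖T x + c • (x : H)‖ := by
  have him : (⟪T x, (x : H)⟫_ℂ).im = 0 := by
    have h1 : (starRingEnd ℂ) ⟪(x : H), T x⟫_ℂ = ⟪T x, (x : H)⟫_ℂ := inner_conj_symm _ _
    rw [← hsymm x x] at h1
    have h2 := congrArg Complex.im h1
    rw [Complex.conj_im] at h2
    linarith
  have hre : RCLike.re ⟪T x, c • (x : H)⟫_ℂ = 0 := by
    rw [inner_smul_right]
    simp only [RCLike.re_to_complex, Complex.mul_re, hc, him]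
    ring
  have hsq : ‖T x + c • (x : H)‖ ^ 2 = ‖T x‖ ^ 2 + ‖(x : H)‖ ^ 2 := by
    rw [norm_add_sq (𝕜 := ℂ), hre, norm_smul, hc2]
    ring
  constructor
  · nlinarith [norm_nonneg (T x + c • (x : H)), norm_nonneg ((x : H)), norm_nonneg (T x)]
  · nlinarith [norm_nonneg (T x + c • (x : H)), norm_nonneg ((x : H)), norm_nonneg (T x)]

private theorem essSA_surj_closure (T : H →ₗ.[ℂ] H) (hd : Dense (T.domain : Set H))
    (hcl : T.IsClosable)
    (hsymm : ∀ x y : T.domain, ⟪T x, (y : H)⟫_ℂ = ⟪(x : H), T y⟫_ℂ)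
    (c : ℂ) (hc : c.re = 0) (hc2 : ‖c‖ = 1)
    (hr : ∀ u : T.domain, ∃ x : T.domain, T x + c • (x : H) = (u : H))
    (u : H) : ∃ x : T.closure.domain, T.closure x + c • (x : H) = u := by
  obtain ⟨f, hf, hfu⟩ := mem_closure_iff_seq_limit.mp (hd u)
  choose x hx using fun n => hr ⟨f n, hf n⟩
  have key : ∀ n m : ℕ, ‖(x n : H) - (x m : H)‖ ≤ ‖f n - f m‖ ∧
      ‖T (x n) - T (x m)‖ ≤ ‖f n - f m‖ := by
    intro n m
    have h1 := essSA_norm_le T hsymm c hc hc2 (x n - x m)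
    have h2 : T (x n - x m) = T (x n) - T (x m) := map_sub _ _ _
    have h3 : ((x n - x m : T.domain) : H) = (x n : H) - (x m : H) := rfl
    rw [h2, h3] at h1
    have h4 : T (x n) - T (x m) + c • ((x n : H) - (x m : H)) = f n - f m := by
      simp only [smul_sub]
      rw [show T (x n) - T (x m) + (c • (x n : H) - c • (x m : H))
        = (T (x n) + c • (x n : H)) - (T (x m) + c • (x m : H)) by abel, hx n, hx m]
    rw [h4] at h1
    exact h1
  have hcf : CauchySeq f := hfu.cauchySeq
  have hcx : CauchySeq fun n => (x n : H) := by
    rw [Metric.cauchySeq_iff] at hcf ⊢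
    intro ε hε
    obtain ⟨N, hN⟩ := hcf ε hε
    exact ⟨N, fun m hm n hn => lt_of_le_of_lt
      (by rw [dist_eq_norm, dist_eq_norm] at *; exact (key m n).1) (hN m hm n hn)⟩
  have hcTx : CauchySeq fun n => T (x n) := by
    rw [Metric.cauchySeq_iff] at hcf ⊢
    intro ε hε
    obtain ⟨N, hN⟩ := hcf ε hε
    exact ⟨N, fun m hm n hn => lt_of_le_of_lt
      (by rw [dist_eq_norm, dist_eq_norm] at *; exact (key m n).2) (hN m hm n hn)⟩
  obtain ⟨xl, hxl⟩ := cauchySeq_tendsto_of_complete hcx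
  obtain ⟨vl, hvl⟩ := cauchySeq_tendsto_of_complete hcTx
  have hmem : (xl, vl) ∈ closure (T.graph : Set (H × H)) := by
    refine mem_closure_of_tendsto (hxl.prodMk_nhds hvl) ?_
    exact Filter.Eventually.of_forall fun n => T.mem_graph (x n)
  rw [← Submodule.topologicalClosure_coe, hcl.graph_closure_eq_closure_graph] at hmem
  rw [SetLike.mem_coe, LinearPMap.mem_graph_iff] at hmem
  obtain ⟨y, hy1, hy2⟩ := hmem
  refine ⟨y, ?_⟩
  have htend : Filter.Tendsto (fun n => T (x n) + c • (x n : H)) Filter.atTop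
      (nhds (vl + c • xl)) := hvl.add (hxl.const_smul c)
  have htend2 : Filter.Tendsto (fun n => T (x n) + c • (x n : H)) Filter.atTop (nhds u) := by
    simpa only [hx] using hfu
  rw [hy2, hy1]
  exact tendsto_nhds_unique htend htend2

omit [CompleteSpace H] in
private theorem essSA_closure_symm (T : H →ₗ.[ℂ] H) (hcl : T.IsClosable)
    (hsymm : ∀ x y : T.domain, ⟪T x, (y : H)⟫_ℂ = ⟪(x : H), T y⟫_ℂ) :
    ∀ x y : T.closure.domain, ⟪T.closure x, (y : H)⟫_ℂ = ⟪(x : H), T.closure y⟫_ℂ := by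
  have hG : (T.closure.graph : Set (H × H)) = closure (T.graph : Set (H × H)) := by
    rw [← hcl.graph_closure_eq_closure_graph, Submodule.topologicalClosure_coe]
  have step1 : ∀ q ∈ (T.graph : Set (H × H)), ∀ p ∈ closure (T.graph : Set (H × H)),
      ⟪p.2, q.1⟫_ℂ = ⟪p.1, q.2⟫_ℂ := by
    intro q hq
    have hclosed : IsClosed {p : H × H | ⟪p.2, q.1⟫_ℂ = ⟪p.1, q.2⟫_ℂ} :=
      isClosed_eq (Continuous.inner continuous_snd continuous_const)
        (Continuous.inner continuous_fst continuous_const)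
    refine fun p hp => closure_minimal ?_ hclosed hp
    intro r hr
    rw [SetLike.mem_coe, LinearPMap.mem_graph_iff] at hq hr
    obtain ⟨yq, hq1, hq2⟩ := hq
    obtain ⟨yr, hr1, hr2⟩ := hr
    simp only [Set.mem_setOf_eq, ← hq1, ← hq2, ← hr1, ← hr2]
    exact hsymm yr yq
  have step2 : ∀ p ∈ closure (T.graph : Set (H × H)), ∀ q ∈ closure (T.graph : Set (H × H)),
      ⟪p.2, q.1⟫_ℂ = ⟪p.1, q.2⟫_ℂ := by
    intro p hp
    have hclosed : IsClosed {q : H × H | ⟪p.2, q.1⟫_ℂ = ⟪p.1, q.2⟫_ℂ} :=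
      isClosed_eq (Continuous.inner continuous_const continuous_fst)
        (Continuous.inner continuous_const continuous_snd)
    exact fun q hq => closure_minimal (fun r hr => step1 r hr p hp) hclosed hq
  intro x y
  have hx : ((x : H), T.closure x) ∈ closure (T.graph : Set (H × H)) := by
    rw [← hG]; exact T.closure.mem_graph x
  have hy : ((y : H), T.closure y) ∈ closure (T.graph : Set (H × H)) := by
    rw [← hG]; exact T.closure.mem_graph y
  exact step2 _ hx _ hy

private theorem essSA_key (T : H →ₗ.[ℂ] H) (hd : Dense (T.domain : Set H))
    (hsymm : ∀ x y : T.domain, ⟪T x, (y : H)⟫_ℂ = ⟪(x : H), T y⟫_ℂ)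
    (hp : ∀ u : T.domain, ∃ x : T.domain, T x + Complex.I • (x : H) = (u : H))
    (hm : ∀ u : T.domain, ∃ x : T.domain, T x + (-Complex.I) • (x : H) = (u : H)) :
    T.closure.adjoint = T.closure := by
  have hfa : T.IsFormalAdjoint T := hsymm
  have hTle : T ≤ T.adjoint := hfa.le_adjoint hd
  have hcl : T.IsClosable := (essSA_adjoint_isClosed T hd).isClosable.leIsClosable hTle
  set S := T.closure with hS
  have hdS : Dense (S.domain : Set H) := hd.mono (fun _ h => T.le_closure.1 h)
  have hSsymm : ∀ x y : S.domain, ⟪S x, (y : H)⟫_ℂ = ⟪(x : H), S y⟫_ℂ :=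
    essSA_closure_symm T hcl hsymm
  have hSfa : S.IsFormalAdjoint S := hSsymm
  have hle1 : S ≤ S.adjoint := hSfa.le_adjoint hdS
  have hsurjP : ∀ u : H, ∃ x : S.domain, S x + Complex.I • (x : H) = u :=
    essSA_surj_closure T hd hcl hsymm Complex.I (by simp) (by simp) hp
  have hsurjM : ∀ u : H, ∃ x : S.domain, S x + (-Complex.I) • (x : H) = u :=
    essSA_surj_closure T hd hcl hsymm (-Complex.I) (by simp) (by simp) hm
  have hle2 : S.adjoint ≤ S := by
    apply LinearPMap.le_of_le_graph
    intro p hp'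
    rw [LinearPMap.mem_graph_iff] at hp' ⊢
    obtain ⟨y, hy1, hy2⟩ := hp'
    obtain ⟨x, hxeq⟩ := hsurjM (S.adjoint y + (-Complex.I) • (y : H))
    have hfa' : S.adjoint.IsFormalAdjoint S := LinearPMap.adjoint_isFormalAdjoint hdS
    have e3 : S.adjoint y - S x = Complex.I • ((y : H) - (x : H)) := by
      rw [smul_sub]
      linear_combination (norm := module) -hxeq
    have hw0 : ((y : H) - (x : H)) = 0 := by
      have hperp : ∀ u : S.domain,
          ⟪(y : H) - (x : H), S u + Complex.I • (u : H)⟫_ℂ = 0 := by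
        intro u
        have e1 : ⟪S.adjoint y, (u : H)⟫_ℂ = ⟪(y : H), S u⟫_ℂ := hfa' y u
        have e2 : ⟪S x, (u : H)⟫_ℂ = ⟪(x : H), S u⟫_ℂ := hSsymm x u
        have e4 : ⟪(y : H) - (x : H), S u⟫_ℂ
            = ⟪S.adjoint y - S x, (u : H)⟫_ℂ := by
          rw [inner_sub_left, inner_sub_left, e1, e2]
        rw [inner_add_right, inner_smul_right, e4, e3, inner_smul_left]
        rw [Complex.conj_I]
        ring
      obtain ⟨v, hv⟩ := hsurjP ((y : H) - (x : H))
      have h5 := hperp v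
      rw [hv] at h5
      exact inner_self_eq_zero.mp h5
    have hy_eq_x : (y : H) = (x : H) := sub_eq_zero.mp hw0
    have hz : S.adjoint y = S x := by
      have h6 := e3
      rw [hw0, smul_zero, sub_eq_zero] at h6
      exact h6
    exact ⟨x, by rw [← hy1, hy_eq_x], by rw [← hy2, hz]⟩
  exact le_antisymm hle2 hle1

end EssSAProof

/-- **Algebraic resolvent condition for essential self-adjointness in every GNS
representation.** If there are `b₊, b₋ ∈ 𝔄` with `(a + i·1)b₊ = 1` and `(a − i·1)b₋ = 1`,
then the GNS operator `π(a)` with domain `D` is essentially self-adjoint. -/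
theorem ess_selfAdjoint_of_algebraic_resolvent
    {A : Type*} [Ring A] [Algebra ℂ A] [StarRing A] [StarModule ℂ A]
    (ω : A →ₗ[ℂ] ℂ) (hpos : ∀ a : A, 0 ≤ ω (star a * a)) (hone : ω 1 ≠ 0)
    {H : Type*} [NormedAddCommGroup H] [InnerProductSpace ℂ H] [CompleteSpace H]
    (D : Submodule ℂ H) (π : A →ₐ[ℂ] Module.End ℂ D) (ψ : D)
    (hGNS : IsGNSQuadruple ω D π ψ)
    (a : A) (ha : star a = a)
    (hres : ∃ bp bm : A, (a + Complex.I • (1 : A)) * bp = 1 ∧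
      (a - Complex.I • (1 : A)) * bm = 1) :
    EssSelfAdjoint ({ domain := D, toFun := D.subtype.comp (π a) } : H →ₗ.[ℂ] H) := by
  obtain ⟨bp, bm, hbp, hbm⟩ := hres
  set T : H →ₗ.[ℂ] H := { domain := D, toFun := D.subtype.comp (π a) } with hT
  have hTdom : T.domain = D := rfl
  have hTapp : ∀ x : D, T x = ((π a x : D) : H) := fun x => rfl
  have hd : Dense (T.domain : Set H) := hGNS.1
  have hsymm : ∀ x y : T.domain, ⟪T x, (y : H)⟫_ℂ = ⟪(x : H), T y⟫_ℂ := by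
    intro x y
    have h := hGNS.2.1 a x y
    rw [ha] at h
    exact h
  have hp : ∀ u : T.domain, ∃ x : T.domain, T x + Complex.I • (x : H) = (u : H) := by
    intro u
    refine ⟨π bp u, ?_⟩
    have h0 : (π ((a + Complex.I • (1 : A)) * bp)) u = (π 1) u := by rw [hbp]
    rw [map_mul, map_one, map_add, map_smul, map_one] at h0
    have h1 : π a (π bp u) + Complex.I • (π bp u) = u := by
      simpa [Module.End.mul_apply, LinearMap.add_apply, LinearMap.smul_apply] using h0
    calc T (π bp u) + Complex.I • ((π bp u : D) : H)
        = ((π a (π bp u) + Complex.I • (π bp u) : D) : H) := by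
          rw [hTapp]; push_cast [Submodule.coe_add, Submodule.coe_smul]; rfl
      _ = (u : H) := by rw [h1]
  have hm : ∀ u : T.domain, ∃ x : T.domain, T x + (-Complex.I) • (x : H) = (u : H) := by
    intro u
    refine ⟨π bm u, ?_⟩
    have h0 : (π ((a - Complex.I • (1 : A)) * bm)) u = (π 1) u := by rw [hbm]
    rw [map_mul, map_one, map_sub, map_smul, map_one] at h0
    have h1 : π a (π bm u) - Complex.I • (π bm u) = u := by
      simpa [Module.End.mul_apply, LinearMap.sub_apply, LinearMap.smul_apply] using h0
    calc T (π bm u) + (-Complex.I) • ((π bm u : D) : H)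
        = ((π a (π bm u) - Complex.I • (π bm u) : D) : H) := by
          rw [hTapp, neg_smul, ← sub_eq_add_neg]
          push_cast [Submodule.coe_sub, Submodule.coe_smul]; rfl
      _ = (u : H) := by rw [h1]
  exact essSA_key T hd hsymm hp hm
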